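/- Consider the family of maps $T_\varepsilon : [0,1) \to [0,1)$, $T_\varepsilon y = 2y + \varepsilon^\beta \bmod 1$ where $\beta > 0$ is fixed, the observable $a(y) = \cos 2\pi y$, and the slow recursion $x_{n+1} = x_n + \varepsilon \cos(2\pi y_n)$, $x_0 = 0$, $y_{n+1} = T_\varepsilon y_n$. Then for every $y_0 \in [0,1)$, $\limsup_{\varepsilon \to 0} x_{[1/\varepsilon]} = 1$. -/

import Mathlib

open Real Filter Topology

-- explicit formula for the fast variable
lemma y_formula_aux (β : ℝ) (y0 t : ℝ) (h0 : 0 ≤ y0) (h1 : y0 < 1)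
    (y : ℝ → ℕ → ℝ) (ε : ℝ)
    (hinit : y ε 0 = y0)
    (hrec : ∀ n, y ε (n + 1) = Int.fract (2 * y ε n + ε ^ β))
    (hεβ : ε ^ β = t) :
    ∀ n, y ε n = Int.fract (2 ^ n * (y0 + t) - t) := by
  intro n
  induction n with
  | zero =>
      simp only [pow_zero, one_mul, add_sub_cancel_right, hinit]
      exact (Int.fract_eq_self.mpr ⟨h0, h1⟩).symm
  | succ n ih =>
      rw [hrec, ih, hεβ, Int.fract_eq_fract]
      refine ⟨-2 * ⌊2 ^ n * (y0 + t) - t⌋, ?_⟩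
      rw [Int.fract]
      push_cast
      ring

theorem no_almost_sure_averaging (β : ℝ) (hβ : 0 < β)
    (y0 : ℝ) (hy0 : y0 ∈ Set.Ico (0:ℝ) 1)
    (y : ℝ → ℕ → ℝ)
    (hinit : ∀ ε, y ε 0 = y0)
    (hrec : ∀ ε n, y ε (n + 1) = Int.fract (2 * y ε n + ε ^ β)) :
    limsup (fun ε : ℝ => ε * ∑ n ∈ Finset.range ⌊1 / ε⌋₊, Real.cos (2 * π * y ε n))
      (nhdsWithin 0 (Set.Ioi 0)) = 1 := by
  set f : ℝ → ℝ := fun ε : ℝ => ε * ∑ n ∈ Finset.range ⌊1 / ε⌋₊, Real.cos (2 * π * y ε n)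
    with hf
  -- global upper bound on positive reals
  have hub : ∀ ε : ℝ, 0 < ε → f ε ≤ 1 := by
    intro ε hε
    have hsum : ∑ n ∈ Finset.range ⌊1 / ε⌋₊, Real.cos (2 * π * y ε n) ≤ (⌊1 / ε⌋₊ : ℝ) := by
      calc ∑ n ∈ Finset.range ⌊1 / ε⌋₊, Real.cos (2 * π * y ε n)
          ≤ (Finset.range ⌊1 / ε⌋₊).card • (1 : ℝ) :=
            Finset.sum_le_card_nsmul _ _ _ (fun i _ => Real.cos_le_one _)
        _ = (⌊1 / ε⌋₊ : ℝ) := by simp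
    have h2 : (⌊1 / ε⌋₊ : ℝ) ≤ 1 / ε := Nat.floor_le (by positivity)
    calc f ε ≤ ε * (⌊1 / ε⌋₊ : ℝ) := by
          exact mul_le_mul_of_nonneg_left hsum hε.le
      _ ≤ ε * (1 / ε) := mul_le_mul_of_nonneg_left h2 hε.le
      _ = 1 := by field_simp
  -- the special sequence of ε's
  set k : ℕ → ℤ := fun N => ⌊(2:ℝ) ^ N * y0⌋ + 1 with hk
  set t : ℕ → ℝ := fun N => (k N : ℝ) / 2 ^ N - y0 with ht
  set e : ℕ → ℝ := fun N => (t N) ^ (1 / β : ℝ) with he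
  have h2N : ∀ N : ℕ, (0:ℝ) < 2 ^ N := fun N => by positivity
  have ht_pos : ∀ N, 0 < t N := by
    intro N
    have h := Int.lt_floor_add_one ((2:ℝ) ^ N * y0)
    simp only [ht, hk, sub_pos]
    rw [lt_div_iff₀ (h2N N)]
    push_cast
    linarith
  have ht_le : ∀ N, t N ≤ (1/2 : ℝ) ^ N := by
    intro N
    have h1 : (k N : ℝ) ≤ 2 ^ N * y0 + 1 := by
      simp only [hk]
      push_cast
      have := Int.floor_le ((2:ℝ) ^ N * y0)
      linarith
    simp only [ht]
    rw [sub_le_iff_le_add, div_le_iff₀ (h2N N)]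
    have : ((1/2 : ℝ) ^ N + y0) * 2 ^ N = 1 + 2 ^ N * y0 := by
      rw [add_mul, ← mul_pow]
      norm_num
      ring
    rw [this]
    linarith
  have he_pos : ∀ N, 0 < e N := fun N => Real.rpow_pos_of_pos (ht_pos N) _
  have heβ : ∀ N, (e N) ^ β = t N := by
    intro N
    simp only [he]
    rw [← Real.rpow_mul (ht_pos N).le, one_div_mul_cancel hβ.ne', Real.rpow_one]
  have hkey : ∀ N, (2:ℝ) ^ N * (y0 + t N) = (k N : ℝ) := by
    intro N
    simp only [ht]
    field_simp
    ring
  -- limits of the building blocks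
  have htt : Tendsto t atTop (𝓝 0) :=
    tendsto_of_tendsto_of_tendsto_of_le_of_le tendsto_const_nhds
      (tendsto_pow_atTop_nhds_zero_of_lt_one (by norm_num) (by norm_num))
      (fun N => (ht_pos N).le) ht_le
  have hβ' : (0:ℝ) < 1/β := one_div_pos.mpr hβ
  have hte : Tendsto e atTop (𝓝 0) := by
    have hc := (Real.continuousAt_rpow_const 0 (1/β) (Or.inr hβ'.le)).tendsto.comp htt
    rw [Real.zero_rpow hβ'.ne'] at hc
    exact hc
  have heN : Tendsto (fun N => e N * N) atTop (𝓝 0) := by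
    set r : ℝ := (1/2 : ℝ) ^ (1/β : ℝ) with hr
    have hr0 : 0 ≤ r := (Real.rpow_pos_of_pos (by norm_num) _).le
    have hr1 : r < 1 := Real.rpow_lt_one (by norm_num) (by norm_num) hβ'
    refine tendsto_of_tendsto_of_tendsto_of_le_of_le tendsto_const_nhds
      (tendsto_self_mul_const_pow_of_lt_one hr0 hr1) (fun N => ?_) (fun N => ?_)
    · exact mul_nonneg (he_pos N).le (Nat.cast_nonneg N)
    · have h1 : e N ≤ ((1/2 : ℝ) ^ N) ^ (1/β : ℝ) :=
        Real.rpow_le_rpow (ht_pos N).le (ht_le N) hβ'.le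
      have h2 : (((1/2 : ℝ)) ^ N) ^ (1/β : ℝ) = r ^ N := by
        rw [← Real.rpow_natCast (1/2 : ℝ) N, ← Real.rpow_mul (by norm_num), mul_comm,
          Real.rpow_mul (by norm_num), Real.rpow_natCast]
      have h3 : e N ≤ r ^ N := h2 ▸ h1
      calc e N * N ≤ r ^ N * N := by
            exact mul_le_mul_of_nonneg_right h3 (Nat.cast_nonneg N)
        _ = N * r ^ N := by ring
  have heM : Tendsto (fun N => e N * (⌊1 / e N⌋₊ : ℝ)) atTop (𝓝 1) := by
    have hlow : ∀ N : ℕ, 1 - e N ≤ e N * (⌊1 / e N⌋₊ : ℝ) := by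
      intro N
      have h1 : 1 / e N - 1 < (⌊1 / e N⌋₊ : ℝ) := Nat.sub_one_lt_floor _
      have h2 := mul_lt_mul_of_pos_left h1 (he_pos N)
      have h3 : e N * (1 / e N - 1) = 1 - e N := by
        rw [mul_sub, mul_one_div, div_self (he_pos N).ne', mul_one]
      linarith
    have hup : ∀ N : ℕ, e N * (⌊1 / e N⌋₊ : ℝ) ≤ 1 := by
      intro N
      have h1 : (⌊1 / e N⌋₊ : ℝ) ≤ 1 / e N := Nat.floor_le (one_div_nonneg.mpr (he_pos N).le)
      have := mul_le_mul_of_nonneg_left h1 (he_pos N).le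
      have h2 : e N * (1 / e N) = 1 := by
        rw [mul_one_div, div_self (he_pos N).ne']
      linarith
    refine tendsto_of_tendsto_of_tendsto_of_le_of_le ?_ tendsto_const_nhds hlow hup
    simpa using tendsto_const_nhds.sub hte
  have hcos : Tendsto (fun N => Real.cos (2 * π * t N)) atTop (𝓝 1) := by
    have h2pt : Tendsto (fun N => 2 * π * t N) atTop (𝓝 0) := by
      simpa using htt.const_mul (2 * π)
    have := (Real.continuous_cos.continuousAt (x := (0:ℝ))).tendsto.comp h2pt
    simpa [Function.comp_def] using this
  -- eventually N < floor(1/e N)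
  have hNM : ∀ᶠ N : ℕ in atTop, N < ⌊1 / e N⌋₊ := by
    have h1 : ∀ᶠ N : ℕ in atTop, e N * N < 1/2 := heN.eventually (eventually_lt_nhds (show (0:ℝ) < 1/2 by norm_num))
    have h2 : ∀ᶠ N : ℕ in atTop, (1/2 : ℝ) < e N * (⌊1 / e N⌋₊ : ℝ) :=
      heM.eventually (eventually_gt_nhds (show (1/2:ℝ) < 1 by norm_num))
    filter_upwards [h1, h2] with N hN1 hN2
    have : e N * (N : ℝ) < e N * (⌊1 / e N⌋₊ : ℝ) := by linarith
    exact_mod_cast lt_of_mul_lt_mul_left this (he_pos N).le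
  -- per-N lower bound
  set L : ℕ → ℝ := fun N =>
    (e N * (⌊1 / e N⌋₊ : ℝ) - e N * N) * Real.cos (2 * π * t N) - e N * N with hL
  have hLf : ∀ᶠ N : ℕ in atTop, L N ≤ f (e N) := by
    filter_upwards [hNM, eventually_ge_atTop 1] with N hNlt hN1
    set M := ⌊1 / e N⌋₊ with hM
    have hyn : ∀ n, y (e N) n = Int.fract (2 ^ n * (y0 + t N) - t N) :=
      y_formula_aux β y0 (t N) hy0.1 hy0.2 y (e N) (hinit _) (fun n => hrec _ n) (heβ N)
    have htN1 : t N < 1 := by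
      have h := ht_le N
      have h2 : ((1:ℝ)/2) ^ N ≤ (1/2) ^ 1 :=
        pow_le_pow_of_le_one (by norm_num) (by norm_num) hN1
      exact lt_of_le_of_lt (le_trans h h2) (by norm_num)
    have hyc : ∀ n, N ≤ n → Real.cos (2 * π * y (e N) n) = Real.cos (2 * π * t N) := by
      intro n hn
      have hpow : (2:ℝ) ^ n * (y0 + t N) = ((2 ^ (n - N) * k N : ℤ) : ℝ) := by
        have hsplitpow : (2:ℝ) ^ n = 2 ^ (n - N) * 2 ^ N := by
          rw [← pow_add, Nat.sub_add_cancel hn]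
        rw [hsplitpow, mul_assoc, hkey N]
        push_cast
        ring
      have hyval : y (e N) n = 1 - t N := by
        rw [hyn n, hpow]
        have : ((2 ^ (n - N) * k N : ℤ) : ℝ) - t N = -(t N) + ((2 ^ (n - N) * k N : ℤ) : ℝ) := by
          ring
        rw [this, Int.fract_add_intCast, Int.fract_neg, Int.fract_eq_self.mpr ⟨(ht_pos N).le, htN1⟩]
        rw [Int.fract_eq_self.mpr ⟨(ht_pos N).le, htN1⟩]
        exact (ht_pos N).ne'
      rw [hyval]
      have : 2 * π * (1 - t N) = 2 * π - 2 * π * t N := by ring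
      rw [this, Real.cos_sub, Real.cos_two_pi, Real.sin_two_pi]
      ring
    -- split the sum
    have hsum : ∑ n ∈ Finset.range M, Real.cos (2 * π * y (e N) n)
        = (∑ n ∈ Finset.range N, Real.cos (2 * π * y (e N) n))
          + ((M - N : ℕ) : ℝ) * Real.cos (2 * π * t N) := by
      rw [Finset.range_eq_Ico, ← Finset.sum_Ico_consecutive _ (Nat.zero_le N) hNlt.le,
        ← Finset.range_eq_Ico]
      congr 1
      rw [Finset.sum_congr rfl (fun n hn => hyc n (Finset.mem_Ico.mp hn).1),
        Finset.sum_const, Nat.card_Ico, nsmul_eq_mul]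
    have hS1 : -(N : ℝ) ≤ ∑ n ∈ Finset.range N, Real.cos (2 * π * y (e N) n) := by
      have := Finset.card_nsmul_le_sum (Finset.range N)
        (fun n => Real.cos (2 * π * y (e N) n)) (-1)
        (fun i _ => Real.neg_one_le_cos _)
      simpa using this
    have hcast : ((M - N : ℕ) : ℝ) = (M : ℝ) - (N : ℝ) := by
      rw [Nat.cast_sub hNlt.le]
    have hfval : f (e N)
        = e N * ((∑ n ∈ Finset.range N, Real.cos (2 * π * y (e N) n))
            + ((M : ℝ) - (N : ℝ)) * Real.cos (2 * π * t N)) := by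
      rw [hf]
      simp only
      rw [← hM, hsum, hcast]
    rw [hfval, hL]
    have hepos := (he_pos N).le
    have hdiff : e N * ((∑ n ∈ Finset.range N, Real.cos (2 * π * y (e N) n))
            + ((M : ℝ) - (N : ℝ)) * Real.cos (2 * π * t N))
        - ((e N * (M : ℝ) - e N * N) * Real.cos (2 * π * t N) - e N * N)
        = e N * ((∑ n ∈ Finset.range N, Real.cos (2 * π * y (e N) n)) + N) := by
      ring
    nlinarith [mul_nonneg hepos (by linarith :
      (0:ℝ) ≤ (∑ n ∈ Finset.range N, Real.cos (2 * π * y (e N) n)) + N)]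
  have hLtend : Tendsto L atTop (𝓝 1) := by
    have h := ((heM.sub heN).mul hcos).sub heN
    have h10 : ((1:ℝ) - 0) * 1 - 0 = 1 := by norm_num
    rw [h10] at h
    exact h
  have hftend : Tendsto (fun N => f (e N)) atTop (𝓝 1) :=
    tendsto_of_tendsto_of_tendsto_of_le_of_le' hLtend tendsto_const_nhds hLf
      (Eventually.of_forall fun N => hub _ (he_pos N))
  have hmem : Tendsto e atTop (𝓝[>] (0:ℝ)) :=
    tendsto_nhdsWithin_iff.mpr ⟨hte, Eventually.of_forall fun N => Set.mem_Ioi.mpr (he_pos N)⟩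
  have hfreq : ∀ a : ℝ, a < 1 → ∃ᶠ ε in 𝓝[>] (0:ℝ), a ≤ f ε := by
    intro a ha
    have h1 : ∀ᶠ N : ℕ in atTop, a ≤ f (e N) :=
      (hftend.eventually (eventually_gt_nhds ha)).mono fun N h => h.le
    exact hmem.frequently h1.frequently
  have hbdd : IsBoundedUnder (· ≤ ·) (𝓝[>] (0:ℝ)) f :=
    ⟨1, eventually_map.mpr (by
      filter_upwards [self_mem_nhdsWithin] with x hx using hub x hx)⟩
  have hcob : IsCoboundedUnder (· ≤ ·) (𝓝[>] (0:ℝ)) f :=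
    IsCoboundedUnder.of_frequently_ge (hfreq 0 one_pos)
  refine le_antisymm ?_ ?_
  · refine limsup_le_of_le hcob ?_
    filter_upwards [self_mem_nhdsWithin] with x hx using hub x hx
  · refine le_of_forall_lt fun c hc => ?_
    have h1 : (c + 1) / 2 < 1 := by linarith
    have h2 : c < (c + 1) / 2 := by linarith
    exact lt_of_lt_of_le h2 (le_limsup_of_frequently_le (hfreq _ h1) hbdd)
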